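/- Let m, n be positive integers. If the quadratic polynomial X^2 - m*n*X + (m + n) has a positive integer root, then there exist positive integers a, b with a + b = m*n and a*b = m + n, and necessarily a, b, m, n ∈ {1, 2, 3, 5}. -/
import Mathlib

theorem stmt10 (m n : ℕ) (hm : 0 < m) (hn : 0 < n)
    (h : ∃ x : ℕ, 0 < x ∧ (x : ℤ) ^ 2 - (m : ℤ) * n * x + ((m : ℤ) + n) = 0) :
    ∃ a b : ℕ, 0 < a ∧ 0 < b ∧ a + b = m * n ∧ a * b = m + n ∧
      a ∈ ({1, 2, 3, 5} : Set ℕ) ∧ b ∈ ({1, 2, 3, 5} : Set ℕ) ∧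
      m ∈ ({1, 2, 3, 5} : Set ℕ) ∧ n ∈ ({1, 2, 3, 5} : Set ℕ) := by
  obtain ⟨x, hx, heq⟩ := h
  have hx1 : (1 : ℤ) ≤ (x : ℤ) := by exact_mod_cast hx
  have hxle : x ≤ m * n := by
    have hz : (x : ℤ) ≤ (m : ℤ) * n := by nlinarith [heq, hx1, hm.le, hn.le]
    exact_mod_cast hz
  obtain ⟨b, hbdef⟩ : ∃ b, b = m * n - x := ⟨_, rfl⟩
  have h1 : x + b = m * n := by omega
  have h2 : x * b = m + n := by
    have hbz : (b : ℤ) = (m : ℤ) * n - x := by omega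
    have hc : (x : ℤ) * b = (m : ℤ) + n := by rw [hbz]; linear_combination -heq
    exact_mod_cast hc
  have hbpos : 0 < b := by
    rcases Nat.eq_zero_or_pos b with h0 | h0
    · simp [h0] at h2; omega
    · exact h0
  obtain ⟨M, hM⟩ : ∃ M, m = M + 1 := ⟨m - 1, by omega⟩
  obtain ⟨N, hN⟩ : ∃ N, n = N + 1 := ⟨n - 1, by omega⟩
  obtain ⟨A, hA⟩ : ∃ A, x = A + 1 := ⟨x - 1, by omega⟩
  obtain ⟨B, hB⟩ : ∃ B, b = B + 1 := ⟨b - 1, by omega⟩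
  subst hM hN hA hB
  have key : M * N + A * B = 2 := by nlinarith [h1, h2]
  have hMN : M * N ≤ 2 := le_trans (Nat.le_add_right _ _) key.le
  have hAB : A * B ≤ 2 := le_trans (Nat.le_add_left _ _) key.le
  -- bound M
  have hM5 : M ≤ 5 := by
    rcases Nat.eq_zero_or_pos N with h0 | h0
    · subst h0
      have hAB2 : A * B = 2 := by simpa using key
      have hBp : 0 < B := Nat.pos_of_ne_zero fun hb0 => by simp [hb0] at hAB2
      have hAp : 0 < A := Nat.pos_of_ne_zero fun ha0 => by simp [ha0] at hAB2
      have : A ≤ 2 := by calc A ≤ A * B := Nat.le_mul_of_pos_right A hBp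
                             _ = 2 := hAB2
      have : B ≤ 2 := by calc B ≤ A * B := Nat.le_mul_of_pos_left B hAp
                             _ = 2 := hAB2
      omega
    · have : M ≤ M * N := Nat.le_mul_of_pos_right M h0
      omega
  have hN5 : N ≤ 5 := by
    rcases Nat.eq_zero_or_pos M with h0 | h0
    · subst h0
      have hAB2 : A * B = 2 := by simpa using key
      have hBp : 0 < B := Nat.pos_of_ne_zero fun hb0 => by simp [hb0] at hAB2
      have hAp : 0 < A := Nat.pos_of_ne_zero fun ha0 => by simp [ha0] at hAB2
      have : A ≤ 2 := by calc A ≤ A * B := Nat.le_mul_of_pos_right A hBp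
                             _ = 2 := hAB2
      have : B ≤ 2 := by calc B ≤ A * B := Nat.le_mul_of_pos_left B hAp
                             _ = 2 := hAB2
      omega
    · have : N ≤ M * N := Nat.le_mul_of_pos_left N h0
      omega
  have hA5 : A ≤ 5 := by
    rcases Nat.eq_zero_or_pos B with h0 | h0
    · subst h0
      have hMN2 : M * N = 2 := by simpa using key
      have hNp : 0 < N := Nat.pos_of_ne_zero fun hb0 => by simp [hb0] at hMN2
      have hMp : 0 < M := Nat.pos_of_ne_zero fun ha0 => by simp [ha0] at hMN2
      have : M ≤ 2 := by calc M ≤ M * N := Nat.le_mul_of_pos_right M hNp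
                             _ = 2 := hMN2
      have : N ≤ 2 := by calc N ≤ M * N := Nat.le_mul_of_pos_left N hMp
                             _ = 2 := hMN2
      omega
    · have : A ≤ A * B := Nat.le_mul_of_pos_right A h0
      omega
  refine ⟨A + 1, B + 1, Nat.succ_pos _, Nat.succ_pos _, h1, h2, ?_⟩
  simp only [Set.mem_insert_iff, Set.mem_singleton_iff]
  interval_cases M <;> interval_cases N <;> interval_cases A <;> omega
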